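/- Let N ≥ 1 and let K ≥ 1. For j = 1, …, N let g_j : ℝ → ℝ (the exact slice propagators), g̃_j : ℝ → ℝ (the time-discretized slice propagators), and φ_j : ℝ → ℝ (the interpolated approximate propagators) be given, and assume each g_j is K-Lipschitz. Define sequences λ*_0 = λ_0 ∈ ℝ, λ*_j = g_j(λ*_{j-1}) and λ_j = φ_j(λ_{j-1}) for j = 1, …, N. Then the final error satisfies |λ_N − λ*_N| ≤ N · K^{N−1} · ( max_{1≤j≤N} |φ_j(λ_{j-1}) − g̃_j(λ_{j-1})| + max_{1≤j≤N} |g̃_j(λ_{j-1}) − g_j(λ_{j-1})| ). -/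

import Mathlib

/-- Composite error bound for the Nievergelt time-parallel method:
with `N` time slices, exact slice propagators `g j`, time-discretized
propagators `gd j`, interpolated propagators `φ j`, each `g j` being
`K`-Lipschitz with `K ≥ 1`, the final error is bounded by
`N * K^(N-1)` times the sum of the maximal per-slice interpolation
error and maximal per-slice time-discretization error. -/
theorem nievergelt_composite_error_bound
    (N : ℕ) (hN : 1 ≤ N) (K : ℝ) (hK : 1 ≤ K)
    (g gd φ : ℕ → ℝ → ℝ)
    (hLip : ∀ j ∈ Finset.Icc 1 N, ∀ x y : ℝ, |g j x - g j y| ≤ K * |x - y|)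
    (lam0 : ℝ) (lamStar lam : ℕ → ℝ)
    (hStar0 : lamStar 0 = lam0) (hLam0 : lam 0 = lam0)
    (hStar : ∀ j ∈ Finset.Icc 1 N, lamStar j = g j (lamStar (j - 1)))
    (hLam : ∀ j ∈ Finset.Icc 1 N, lam j = φ j (lam (j - 1))) :
    |lam N - lamStar N| ≤
      (N : ℝ) * K ^ (N - 1) *
        ((Finset.Icc 1 N).sup' (Finset.nonempty_Icc.mpr hN)
            (fun j => |φ j (lam (j - 1)) - gd j (lam (j - 1))|) +
         (Finset.Icc 1 N).sup' (Finset.nonempty_Icc.mpr hN)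
            (fun j => |gd j (lam (j - 1)) - g j (lam (j - 1))|)) := by
  set A := (Finset.Icc 1 N).sup' (Finset.nonempty_Icc.mpr hN)
      (fun j => |φ j (lam (j - 1)) - gd j (lam (j - 1))|) with hAdef
  set B := (Finset.Icc 1 N).sup' (Finset.nonempty_Icc.mpr hN)
      (fun j => |gd j (lam (j - 1)) - g j (lam (j - 1))|) with hBdef
  have h1N : (1 : ℕ) ∈ Finset.Icc 1 N := Finset.mem_Icc.mpr ⟨le_refl 1, hN⟩
  have hA0 : 0 ≤ A := le_trans (abs_nonneg _)
    (Finset.le_sup' (fun j => |φ j (lam (j - 1)) - gd j (lam (j - 1))|) h1N)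
  have hB0 : 0 ≤ B := le_trans (abs_nonneg _)
    (Finset.le_sup' (fun j => |gd j (lam (j - 1)) - g j (lam (j - 1))|) h1N)
  have hK0 : (0:ℝ) ≤ K := le_trans zero_le_one hK
  have key : ∀ n, n ≤ N → |lam n - lamStar n| ≤ (n : ℝ) * K ^ (n - 1) * (A + B) := by
    intro n
    induction n with
    | zero => intro _; simp [hLam0, hStar0]
    | succ m ih =>
      intro hm
      have hmem : m + 1 ∈ Finset.Icc 1 N :=
        Finset.mem_Icc.mpr ⟨Nat.succ_le_succ (Nat.zero_le m), hm⟩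
      have hprev := ih (le_trans (Nat.le_succ m) hm)
      have e1 : lam (m+1) = φ (m+1) (lam m) := by simpa using hLam _ hmem
      have e2 : lamStar (m+1) = g (m+1) (lamStar m) := by simpa using hStar _ hmem
      have h1 : |φ (m+1) (lam m) - gd (m+1) (lam m)| ≤ A := by
        simpa only [Nat.add_sub_cancel] using
          Finset.le_sup' (fun j => |φ j (lam (j - 1)) - gd j (lam (j - 1))|) hmem
      have h2 : |gd (m+1) (lam m) - g (m+1) (lam m)| ≤ B := by
        simpa only [Nat.add_sub_cancel] using
          Finset.le_sup' (fun j => |gd j (lam (j - 1)) - g j (lam (j - 1))|) hmem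
      have h3 : |g (m+1) (lam m) - g (m+1) (lamStar m)| ≤ K * |lam m - lamStar m| :=
        hLip _ hmem _ _
      have tri : |lam (m+1) - lamStar (m+1)| ≤ A + B + K * |lam m - lamStar m| := by
        rw [e1, e2]
        calc |φ (m+1) (lam m) - g (m+1) (lamStar m)|
            ≤ |φ (m+1) (lam m) - g (m+1) (lam m)| +
              |g (m+1) (lam m) - g (m+1) (lamStar m)| := abs_sub_le _ _ _
          _ ≤ (|φ (m+1) (lam m) - gd (m+1) (lam m)| +
              |gd (m+1) (lam m) - g (m+1) (lam m)|) +
              |g (m+1) (lam m) - g (m+1) (lamStar m)| :=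
                add_le_add (abs_sub_le _ _ _) le_rfl
          _ ≤ A + B + K * |lam m - lamStar m| := by
                exact add_le_add (add_le_add h1 h2) h3
      have hstep : K * |lam m - lamStar m| ≤ (m : ℝ) * K ^ m * (A + B) := by
        calc K * |lam m - lamStar m| ≤ K * ((m : ℝ) * K ^ (m - 1) * (A + B)) :=
              mul_le_mul_of_nonneg_left hprev hK0
          _ ≤ (m : ℝ) * K ^ m * (A + B) := by
              rcases Nat.eq_zero_or_pos m with h0 | h0
              · simp [h0]
              · have hm1 : m - 1 + 1 = m := Nat.succ_pred_eq_of_pos h0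
                have : K * K ^ (m - 1) = K ^ m := by
                  rw [← pow_succ', hm1]
                refine le_of_eq ?_
                rw [← this]; ring
      calc |lam (m+1) - lamStar (m+1)|
          ≤ A + B + K * |lam m - lamStar m| := tri
        _ ≤ A + B + (m : ℝ) * K ^ m * (A + B) := by linarith
        _ ≤ ((m:ℝ)+1) * K ^ m * (A + B) := by
            have hKpow' : (1:ℝ) ≤ K ^ m := one_le_pow₀ hK
            nlinarith [mul_nonneg hA0 hB0, Nat.cast_nonneg (α := ℝ) m]
        _ = ((m+1 : ℕ) : ℝ) * K ^ (m + 1 - 1) * (A + B) := by push_cast; ring_nf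
  exact key N (le_refl N)
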